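/- If 1, α, and αγ are rationally independent (i.e., the only rational solution of p + qα + rαγ = 0 with p,q,r ∈ ℚ is p = q = r = 0), then for every (x₀,y₀) ∈ [0,1)² the orbit {Sⁿ(x₀,y₀) : n ∈ ℕ} of the rectangle exchange S is dense in [0,1)². -/

import Mathlib

open scoped Classical

open Complex Filter Finset

noncomputable abbrev Complex.abs : AbsoluteValue ℂ ℝ := NormedField.toAbsoluteValue ℂ

lemma Complex.norm_eq_abs (z : ℂ) : ‖z‖ = Complex.abs z := rfl

lemma Complex.abs_natCast (n : ℕ) : Complex.abs (n : ℂ) = n := Complex.norm_natCast n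

lemma Complex.abs_ofReal (r : ℝ) : Complex.abs (r : ℂ) = |r| := Complex.norm_real r

lemma Complex.continuous_abs : Continuous Complex.abs := continuous_norm

noncomputable def ee (x : ℝ) : ℂ := Complex.exp ((2 * Real.pi * x : ℝ) * Complex.I)

lemma ee_add (x y : ℝ) : ee (x + y) = ee x * ee y := by
  rw [ee, ee, ee, ← Complex.exp_add]
  congr 1
  push_cast
  ring

lemma ee_zero : ee 0 = 1 := by simp [ee]

lemma abs_ee (x : ℝ) : Complex.abs (ee x) = 1 := Complex.norm_exp_ofReal_mul_I _

lemma ee_int (m : ℤ) : ee m = 1 := by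
  rw [ee]
  have : ((2 * Real.pi * (m:ℝ) : ℝ) : ℂ) * Complex.I = (m:ℂ) * (2 * Real.pi * Complex.I) := by
    push_cast; ring
  rw [this, Complex.exp_int_mul_two_pi_mul_I]

lemma ee_pow (x : ℝ) (n : ℕ) : ee x ^ n = ee (n * x) := by
  rw [ee, ee, ← Complex.exp_nat_mul]
  congr 1
  push_cast
  ring

lemma ee_eq_one_iff {x : ℝ} : ee x = 1 ↔ ∃ m : ℤ, x = m := by
  rw [ee, Complex.exp_eq_one_iff]
  constructor
  · rintro ⟨n, hn⟩
    refine ⟨n, ?_⟩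
    have h2 : ((2 * Real.pi * x : ℝ) : ℂ) * Complex.I = (n:ℂ) * (2 * Real.pi * Complex.I) := hn
    have hI : (Complex.I : ℂ) ≠ 0 := Complex.I_ne_zero
    have hpi : (Real.pi : ℂ) ≠ 0 := by
      exact_mod_cast Complex.ofReal_ne_zero.mpr Real.pi_ne_zero
    have h3 : (2:ℂ) * Real.pi * x * Complex.I = (n:ℂ) * (2 * Real.pi * Complex.I) := by
      push_cast at h2 ⊢; linear_combination h2
    have h4 : ((x:ℂ) - n) * (2 * Real.pi * Complex.I) = 0 := by linear_combination h3
    have hne : (2 * (Real.pi:ℂ) * Complex.I) ≠ 0 := by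
      simp [hpi, Complex.I_ne_zero]
    have : ((x:ℂ)) = (n:ℂ) := by
      rcases mul_eq_zero.mp h4 with h | h
      · exact sub_eq_zero.mp h
      · exact absurd h hne
    exact_mod_cast this
  · rintro ⟨m, rfl⟩
    exact ⟨m, by push_cast; ring⟩

lemma abs_one_add_ee {w : ℝ} : Complex.abs (1 + ee w) = 2 * |Real.cos (Real.pi * w)| := by
  have e1 : ee (w/2) * ee (-(w/2)) = 1 := by
    rw [← ee_add]; norm_num [ee_zero]
  have e2 : ee (w/2) * ee (w/2) = ee w := by
    rw [← ee_add]; congr 1; ring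
  have key : (1 : ℂ) + ee w = ee (w/2) * (ee (-(w/2)) + ee (w/2)) := by
    rw [mul_add, e1, e2]
  have hcos : ee (-(w/2)) + ee (w/2) = ((2 * Real.cos (Real.pi * w) : ℝ) : ℂ) := by
    have h1 : ee (w/2) = Complex.exp ((Real.pi * w : ℝ) * Complex.I) := by
      rw [ee]; congr 2; push_cast; ring
    have h2 : ee (-(w/2)) = Complex.exp (-((Real.pi * w : ℝ)) * Complex.I) := by
      rw [ee]; congr 2; push_cast; ring
    rw [h1, h2]
    have h3 := Complex.two_cos (x := ((Real.pi * w : ℝ) : ℂ))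
    rw [add_comm] at h3
    rw [← h3]
    push_cast [Complex.ofReal_cos]
    ring
  rw [key, map_mul, abs_ee, one_mul, hcos]
  rw [Complex.abs_ofReal]
  rw [abs_mul]
  norm_num

lemma abs_one_add_ee_le {w ε : ℝ} (hε : 0 < ε) (hε2 : ε ≤ 1/2)
    (h : ε ≤ |w - round w|) : Complex.abs (1 + ee w) ≤ 2 * Real.cos (Real.pi * ε) := by
  rw [abs_one_add_ee]
  have hr2 : |w - round w| ≤ 1/2 := abs_sub_round w
  set r := w - round w with hrdef
  have hw : w = r + (round w : ℝ) * 1 := by ring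
  have hcos : Real.cos (Real.pi * w) = Real.cos (Real.pi * r) * Real.cos ((round w : ℝ) * Real.pi) := by
    have : Real.pi * w = Real.pi * r + (round w : ℝ) * Real.pi := by ring
    rw [this, Real.cos_add, Real.sin_int_mul_pi]
    ring
  rw [hcos, abs_mul, Real.abs_cos_int_mul_pi, mul_one]
  have habs : |Real.cos (Real.pi * r)| = Real.cos (Real.pi * |r|) := by
    rw [← Real.cos_abs (Real.pi * r), abs_mul, abs_of_pos Real.pi_pos]
    refine abs_of_nonneg (Real.cos_nonneg_of_mem_Icc ⟨?_, ?_⟩)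
    · have : (0:ℝ) ≤ Real.pi * |r| := by positivity
      nlinarith [Real.pi_pos]
    · nlinarith [Real.pi_pos, abs_nonneg r]
  rw [habs]
  have := Real.cos_le_cos_of_nonneg_of_le_pi (x := Real.pi * ε) (y := Real.pi * |r|)
    (by positivity) (by nlinarith [Real.pi_pos]) (by nlinarith [Real.pi_pos])
  linarith

lemma tendsto_avg_ee {Ω : ℝ} (h : ∀ m : ℤ, Ω ≠ (m:ℝ)) :
    Tendsto (fun N : ℕ => (N:ℂ)⁻¹ * ∑ n ∈ range N, ee (n * Ω)) atTop (nhds 0) := by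
  have hz : ee Ω ≠ 1 := by
    rw [Ne, ee_eq_one_iff]
    push_neg
    exact h
  have hsum : ∀ N : ℕ, ∑ n ∈ range N, ee (n * Ω) = (ee Ω ^ N - 1) / (ee Ω - 1) := by
    intro N
    rw [← geom_sum_eq hz]
    exact Finset.sum_congr rfl fun n _ => (ee_pow Ω n).symm
  apply squeeze_zero_norm (a := fun N : ℕ => (2 / Complex.abs (ee Ω - 1)) / N)
  · intro N
    rcases Nat.eq_zero_or_pos N with rfl | hN
    · simp
    rw [hsum]
    have h1 : ‖(N:ℂ)⁻¹ * ((ee Ω ^ N - 1) / (ee Ω - 1))‖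
        = (N:ℝ)⁻¹ * (Complex.abs (ee Ω ^ N - 1) / Complex.abs (ee Ω - 1)) := by
      rw [norm_mul, norm_div]
      simp [Complex.norm_eq_abs, Complex.abs_natCast]
    rw [h1]
    have h2 : Complex.abs (ee Ω ^ N - 1) ≤ 2 := by
      calc Complex.abs (ee Ω ^ N - 1) ≤ Complex.abs (ee Ω ^ N) + 1 := by
            simpa using Complex.abs.sub_le_add (ee Ω ^ N) 1
        _ ≤ 2 := by rw [map_pow, abs_ee, one_pow]; norm_num
    have h3 : 0 < Complex.abs (ee Ω - 1) := by
      rw [AbsoluteValue.pos_iff]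
      exact sub_ne_zero.mpr hz
    rw [div_div]
    rw [inv_mul_le_iff₀ (by exact_mod_cast hN)]
    have hN' : (0:ℝ) < N := by exact_mod_cast hN
    have heq : (N:ℝ) * (2 / (Complex.abs (ee Ω - 1) * N)) = 2 / Complex.abs (ee Ω - 1) := by
      field_simp
    rw [heq]
    gcongr
  · exact tendsto_const_div_atTop_nhds_zero_nat _

lemma kronecker (θ₁ θ₂ : ℝ)
    (hind : ∀ p q r : ℤ, (p:ℝ) + q*θ₁ + r*θ₂ = 0 → p = 0 ∧ q = 0 ∧ r = 0)
    (c₁ c₂ : ℝ) {ε : ℝ} (hε : 0 < ε) (hε2 : ε ≤ 1/2) :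
    ∃ n : ℕ, ∃ m₁ m₂ : ℤ, |n*θ₁ - c₁ - m₁| < ε ∧ |n*θ₂ - c₂ - m₂| < ε := by
  by_contra hcon
  push_neg at hcon
  have hfar : ∀ n : ℕ, ε ≤ |n*θ₁ - c₁ - round (n*θ₁ - c₁)| ∨
      ε ≤ |n*θ₂ - c₂ - round (n*θ₂ - c₂)| := by
    intro n
    by_cases h1 : |n*θ₁ - c₁ - (round (n*θ₁ - c₁) : ℤ)| < ε
    · exact Or.inr (hcon n _ _ h1)
    · exact Or.inl (le_of_not_gt h1)
  set M : ℝ := 1 + 2 * Real.cos (Real.pi * ε) with hM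
  have hpi := Real.pi_pos
  have hcos0 : 0 ≤ Real.cos (Real.pi * ε) :=
    Real.cos_nonneg_of_mem_Icc ⟨by nlinarith, by nlinarith⟩
  have hM1 : 1 ≤ M := by simp only [hM]; nlinarith
  have hM3 : M < 3 := by
    have h0 : Real.cos (Real.pi * ε) < Real.cos 0 :=
      Real.cos_lt_cos_of_nonneg_of_le_pi le_rfl (by nlinarith) (by positivity)
    rw [Real.cos_zero] at h0
    simp only [hM]; nlinarith
  set T : ℕ → ℂ := fun n => 1 + ee (n*θ₁ - c₁) + ee (n*θ₂ - c₂) with hT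
  have hTb : ∀ n, Complex.abs (T n) ≤ M := by
    intro n
    rcases hfar n with h | h
    · calc Complex.abs (T n)
          ≤ Complex.abs (1 + ee (n*θ₁ - c₁)) + Complex.abs (ee (n*θ₂ - c₂)) :=
            Complex.abs.add_le _ _
        _ ≤ 2 * Real.cos (Real.pi * ε) + 1 := by
            rw [abs_ee]
            have := abs_one_add_ee_le hε hε2 h
            linarith
        _ = M := by rw [hM]; ring
    · have hcomm : T n = 1 + ee (n*θ₂ - c₂) + ee (n*θ₁ - c₁) := by rw [hT]; ring
      calc Complex.abs (T n)
          ≤ Complex.abs (1 + ee (n*θ₂ - c₂)) + Complex.abs (ee (n*θ₁ - c₁)) := by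
            rw [hcomm]; exact Complex.abs.add_le _ _
        _ ≤ 2 * Real.cos (Real.pi * ε) + 1 := by
            rw [abs_ee]
            have := abs_one_add_ee_le hε hε2 h
            linarith
        _ = M := by rw [hM]; ring
  have hM0 : (0:ℝ) < M := by linarith
  obtain ⟨k, hk⟩ : ∃ k : ℕ, ((k:ℝ)+1)^2 * M^k < 3^k := by
    have hr : ‖M/3‖ < 1 := by
      rw [Real.norm_eq_abs, _root_.abs_of_nonneg (show (0:ℝ) ≤ M/3 by positivity)]
      linarith
    have h1 : Tendsto (fun n : ℕ => ((n:ℝ))^2 * (M/3)^n) atTop (nhds 0) :=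
      (summable_pow_mul_geometric_of_norm_lt_one 2 hr).tendsto_atTop_zero
    have h2 : Tendsto (fun n : ℕ => (3/M) * ((((n+1:ℕ)):ℝ)^2 * (M/3)^(n+1))) atTop
        (nhds ((3/M) * 0)) :=
      (h1.comp (tendsto_add_atTop_nat 1)).const_mul _
    rw [mul_zero] at h2
    have h3 : Tendsto (fun n : ℕ => ((n:ℝ)+1)^2 * (M/3)^n) atTop (nhds 0) := by
      apply h2.congr
      intro n
      push_cast
      field_simp
      ring
    obtain ⟨k, hkk⟩ := (h3.eventually_lt_const zero_lt_one).exists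
    refine ⟨k, ?_⟩
    have h3k : (0:ℝ) < 3^k := by positivity
    rw [div_pow] at hkk
    rw [← mul_div_assoc] at hkk
    calc ((k:ℝ)+1)^2 * M^k = (((k:ℝ)+1)^2 * M^k / 3^k) * 3^k := by field_simp
      _ < 1 * 3^k := by exact mul_lt_mul_of_pos_right hkk h3k
      _ = 3^k := one_mul _
  set ω : ℕ → ℕ → ℝ := fun i j => i*θ₁ + ((j:ℝ) - i)*θ₂ with hω
  set Co : ℕ → ℕ → ℂ :=
    fun i j => (k.choose j : ℂ) * (j.choose i : ℂ) * ee (-(i*c₁ + ((j:ℝ)-i)*c₂)) with hCo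
  have hexp : ∀ n : ℕ,
      T n ^ k = ∑ j ∈ range (k+1), ∑ i ∈ range (j+1), Co i j * ee (n * ω i j) := by
    intro n
    have hTn : T n = (ee (n*θ₁ - c₁) + ee (n*θ₂ - c₂)) + 1 := by rw [hT]; ring
    rw [hTn, add_pow]
    refine Finset.sum_congr rfl fun j hj => ?_
    rw [one_pow, mul_one, add_pow, Finset.sum_mul]
    refine Finset.sum_congr rfl fun i hi => ?_
    have hij : i ≤ j := Nat.lt_succ_iff.mp (Finset.mem_range.mp hi)
    have hcast : ((j - i : ℕ) : ℝ) = (j:ℝ) - i := by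
      rw [Nat.cast_sub hij]
    have harg : (i:ℝ)*((n:ℝ)*θ₁ - c₁) + ((j-i:ℕ):ℝ)*((n:ℝ)*θ₂ - c₂)
        = -( (i:ℝ)*c₁ + ((j:ℝ)-(i:ℝ))*c₂) + (n:ℝ) * ω i j := by
      rw [hcast, hω]
      ring
    rw [ee_pow, ee_pow, ← ee_add, harg, ee_add, hCo]
    ring
  have hpair : ∀ j₀ ∈ range (k+1), ∀ i₀ ∈ range (j₀+1), Complex.abs (Co i₀ j₀) ≤ M^k := by
    intro j₀ hj₀ i₀ hi₀
    set S : ℕ → ℂ :=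
      fun N => (N:ℂ)⁻¹ * ∑ n ∈ range N, (T n ^ k * ee (-((n:ℝ) * ω i₀ j₀))) with hS
    have hSrw : ∀ N : ℕ, S N = ∑ j ∈ range (k+1), ∑ i ∈ range (j+1),
        Co i j * ((N:ℂ)⁻¹ * ∑ n ∈ range N, ee ((n:ℝ) * (ω i j - ω i₀ j₀))) := by
      intro N
      rw [hS]
      simp only
      rw [Finset.mul_sum]
      have hterm : ∀ n ∈ range N, (N:ℂ)⁻¹ * (T n ^ k * ee (-((n:ℝ) * ω i₀ j₀)))
          = ∑ j ∈ range (k+1), ∑ i ∈ range (j+1),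
            (N:ℂ)⁻¹ * (Co i j * ee ((n:ℝ) * (ω i j - ω i₀ j₀))) := by
        intro n _
        rw [hexp n, Finset.sum_mul, Finset.mul_sum]
        refine Finset.sum_congr rfl fun j hj => ?_
        rw [Finset.sum_mul, Finset.mul_sum]
        refine Finset.sum_congr rfl fun i hi => ?_
        have hmul : ee ((n:ℝ) * ω i j) * ee (-((n:ℝ) * ω i₀ j₀))
            = ee ((n:ℝ) * (ω i j - ω i₀ j₀)) := by
          rw [← ee_add]; congr 1; ring
        rw [← hmul]
        ring
      rw [Finset.sum_congr rfl hterm, Finset.sum_comm]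
      refine Finset.sum_congr rfl fun j hj => ?_
      rw [Finset.sum_comm]
      refine Finset.sum_congr rfl fun i hi => ?_
      rw [Finset.mul_sum, Finset.mul_sum]
      refine Finset.sum_congr rfl fun n hn => ?_
      ring
    have htarget : ∑ j ∈ range (k+1), ∑ i ∈ range (j+1),
        (if j = j₀ ∧ i = i₀ then Co i₀ j₀ else 0) = Co i₀ j₀ := by
      rw [Finset.sum_eq_single_of_mem j₀ hj₀]
      · rw [Finset.sum_eq_single_of_mem i₀ hi₀]
        · simp
        · intro i hi hne
          simp [hne]
      · intro j hj hne
        apply Finset.sum_eq_zero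
        intro i hi
        simp [hne]
    have hlim : Tendsto S atTop (nhds (Co i₀ j₀)) := by
      rw [← htarget]
      have hlim2 : Tendsto (fun N : ℕ => ∑ j ∈ range (k+1), ∑ i ∈ range (j+1),
          Co i j * ((N:ℂ)⁻¹ * ∑ n ∈ range N, ee ((n:ℝ) * (ω i j - ω i₀ j₀)))) atTop
          (nhds (∑ j ∈ range (k+1), ∑ i ∈ range (j+1),
            (if j = j₀ ∧ i = i₀ then Co i₀ j₀ else 0))) := by
        refine tendsto_finset_sum _ fun j hj => tendsto_finset_sum _ fun i hi => ?_
        by_cases hcase : j = j₀ ∧ i = i₀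
        · obtain ⟨rfl, rfl⟩ := hcase
          rw [if_pos ⟨rfl, rfl⟩]
          apply Tendsto.congr' (f₁ := fun _ : ℕ => Co i j)
          · filter_upwards [eventually_ge_atTop 1] with N hN
            have hN0 : (N:ℂ) ≠ 0 := by
              exact_mod_cast (Nat.pos_of_ne_zero (by omega)).ne'
            simp [sub_self, ee_zero, hN0, Finset.sum_const, Finset.card_range]
          · exact tendsto_const_nhds
        · rw [if_neg hcase]
          have hΩ : ∀ m : ℤ, ω i j - ω i₀ j₀ ≠ (m:ℝ) := by
            intro m hm
            simp only [hω] at hm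
            have hrel : (((-m) : ℤ):ℝ) + (((i:ℤ) - i₀ :ℤ):ℝ) * θ₁
                + (((j:ℤ) - i - j₀ + i₀ :ℤ):ℝ) * θ₂ = 0 := by
              push_cast
              linarith [hm]
            obtain ⟨h1, h2, h3⟩ := hind _ _ _ hrel
            apply hcase
            constructor <;> omega
          have := (tendsto_avg_ee hΩ).const_mul (Co i j)
          simpa using this
      exact hlim2.congr (fun N => (hSrw N).symm)
    have hSb : ∀ᶠ N : ℕ in atTop, Complex.abs (S N) ≤ M^k := by
      filter_upwards [eventually_ge_atTop 1] with N hN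
      rw [hS]
      simp only
      have h1 : Complex.abs (∑ n ∈ range N, T n ^ k * ee (-((n:ℝ) * ω i₀ j₀)))
          ≤ ∑ n ∈ range N, M^k := by
        refine le_trans (Complex.abs.sum_le _ _) (Finset.sum_le_sum fun n _ => ?_)
        rw [map_mul, map_pow, abs_ee, mul_one]
        exact pow_le_pow_left₀ (Complex.abs.nonneg _) (hTb n) k
      rw [Finset.sum_const, Finset.card_range, nsmul_eq_mul] at h1
      rw [map_mul, map_inv₀]
      have hNabs : Complex.abs (N:ℂ) = (N:ℝ) := by
        rw [Complex.abs_natCast]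
      rw [hNabs]
      have hN0 : (0:ℝ) < N := by exact_mod_cast hN
      have hMk : (0:ℝ) ≤ M^k := by positivity
      calc (N:ℝ)⁻¹ * Complex.abs (∑ n ∈ range N, T n ^ k * ee (-((n:ℝ) * ω i₀ j₀)))
          ≤ (N:ℝ)⁻¹ * ((N:ℝ) * M^k) := by
            apply mul_le_mul_of_nonneg_left h1 (by positivity)
        _ = M^k := by field_simp
    have habs : Tendsto (fun N => Complex.abs (S N)) atTop (nhds (Complex.abs (Co i₀ j₀))) :=
      (Complex.continuous_abs.tendsto _).comp hlim
    exact le_of_tendsto habs hSb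
  have habsCo : ∀ i j : ℕ, Complex.abs (Co i j) = (k.choose j : ℝ) * (j.choose i : ℝ) := by
    intro i j
    rw [hCo]
    simp only
    rw [map_mul, map_mul, abs_ee, mul_one, Complex.abs_natCast, Complex.abs_natCast]
  have hsum3 : ∑ j ∈ range (k+1), ∑ i ∈ range (j+1),
      ((k.choose j : ℝ) * (j.choose i : ℝ)) = 3^k := by
    have hinner : ∀ j : ℕ, ∑ i ∈ range (j+1), ((j.choose i : ℝ)) = 2^j := by
      intro j
      rw [← Nat.cast_sum, Nat.sum_range_choose]
      push_cast
      ring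
    have h2 : ∑ j ∈ range (k+1), ((k.choose j : ℝ)) * 2^j = 3^k := by
      have h := add_pow (2:ℝ) 1 k
      norm_num at h
      rw [h]
      exact Finset.sum_congr rfl fun j _ => by ring
    calc ∑ j ∈ range (k+1), ∑ i ∈ range (j+1), ((k.choose j:ℝ) * (j.choose i:ℝ))
        = ∑ j ∈ range (k+1), ((k.choose j:ℝ)) * 2^j := by
          refine Finset.sum_congr rfl fun j hj => ?_
          rw [← Finset.mul_sum, hinner j]
      _ = 3^k := h2
  have hMk : (0:ℝ) ≤ M^k := by positivity
  have hfin : (3:ℝ)^k ≤ ((k:ℝ)+1)^2 * M^k := by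
    calc (3:ℝ)^k = ∑ j ∈ range (k+1), ∑ i ∈ range (j+1), Complex.abs (Co i j) := by
          rw [← hsum3]
          exact Finset.sum_congr rfl fun j _ => Finset.sum_congr rfl fun i _ => (habsCo i j).symm
      _ ≤ ∑ j ∈ range (k+1), ∑ i ∈ range (j+1), M^k :=
          Finset.sum_le_sum fun j hj => Finset.sum_le_sum fun i hi => hpair j hj i hi
      _ = ∑ j ∈ range (k+1), ((j:ℝ)+1) * M^k := by
          refine Finset.sum_congr rfl fun j hj => ?_
          rw [Finset.sum_const, Finset.card_range, nsmul_eq_mul]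
          push_cast
          ring
      _ ≤ ∑ j ∈ range (k+1), ((k:ℝ)+1) * M^k := by
          refine Finset.sum_le_sum fun j hj => ?_
          have hjk : (j:ℝ) ≤ k := by
            exact_mod_cast Nat.lt_succ_iff.mp (Finset.mem_range.mp hj)
          nlinarith
      _ = ((k:ℝ)+1)^2 * M^k := by
          rw [Finset.sum_const, Finset.card_range, nsmul_eq_mul]
          push_cast
          ring
  linarith

/-- The rectangle exchange transformation on `[0,1)²` with parameters `α, γ`. -/
noncomputable def rectS (α γ : ℝ) (p : ℝ × ℝ) : ℝ × ℝ :=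
  if p.1 < 1 - α then (Int.fract (p.1 + α), p.2)
  else (Int.fract (p.1 + α), Int.fract (p.2 + γ))

lemma rect_iterate (α γ : ℝ) (hα : α ∈ Set.Ioo (0:ℝ) 1) (x₀ y₀ : ℝ)
    (hx₀ : x₀ ∈ Set.Ico (0:ℝ) 1) (hy₀ : y₀ ∈ Set.Ico (0:ℝ) 1) (n : ℕ) :
    (rectS α γ)^[n] (x₀, y₀)
      = (Int.fract (x₀ + n * α), Int.fract (y₀ + γ * ⌊x₀ + n * α⌋)) := by
  induction n with
  | zero =>
    have h1 : Int.fract x₀ = x₀ := Int.fract_eq_self.mpr ⟨hx₀.1, hx₀.2⟩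
    have h2 : ⌊x₀⌋ = 0 := Int.floor_eq_zero_iff.mpr ⟨hx₀.1, hx₀.2⟩
    have h3 : Int.fract y₀ = y₀ := Int.fract_eq_self.mpr ⟨hy₀.1, hy₀.2⟩
    simp [h1, h2, h3]
  | succ n ih =>
    rw [Function.iterate_succ_apply', ih]
    set u := x₀ + n*α with hu
    have hfr : Int.fract u + α = (u + α) - (⌊u⌋ : ℤ) := by rw [Int.fract]; push_cast; ring
    have hfst : Int.fract (Int.fract u + α) = Int.fract (u + α) := by
      rw [hfr, Int.fract_sub_intCast]
    have hu1 : x₀ + ((n+1 : ℕ) : ℝ)*α = u + α := by rw [hu]; push_cast; ring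
    have hfr0 : 0 ≤ Int.fract u := Int.fract_nonneg u
    have hfr1 : Int.fract u < 1 := Int.fract_lt_one u
    rw [rectS]
    by_cases hc : Int.fract u < 1 - α
    · rw [if_pos hc]
      have hufl : ((⌊u⌋:ℤ):ℝ) + Int.fract u = u := Int.floor_add_fract u
      have hfl : ⌊u + α⌋ = ⌊u⌋ := by
        apply Int.floor_eq_iff.mpr
        constructor
        · push_cast
          linarith [hα.1]
        · push_cast
          linarith
      rw [hu1, hfst, hfl]
    · rw [if_neg hc]
      push_neg at hc
      have hufl : ((⌊u⌋:ℤ):ℝ) + Int.fract u = u := Int.floor_add_fract u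
      have hfl : ⌊u + α⌋ = ⌊u⌋ + 1 := by
        apply Int.floor_eq_iff.mpr
        constructor
        · push_cast
          linarith
        · push_cast
          linarith [hα.2]
      have hsnd : Int.fract (Int.fract (y₀ + γ * ⌊u⌋) + γ)
          = Int.fract (y₀ + γ * ⌊u + α⌋) := by
        rw [show Int.fract (y₀ + γ * ⌊u⌋) + γ
            = (y₀ + γ * ⌊u + α⌋) - (⌊y₀ + γ * ⌊u⌋⌋ : ℤ) by
          rw [Int.fract, hfl]; push_cast; ring]
        rw [Int.fract_sub_intCast]
      rw [hu1, hfst, hsnd]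

set_option maxHeartbeats 1600000 in
theorem stmt_11 (α γ : ℝ) (hα : α ∈ Set.Ioo (0:ℝ) 1) (hγ : γ ∈ Set.Ioo (0:ℝ) 1)
    (hindep : ∀ p q r : ℚ, (p : ℝ) + q * α + r * (α * γ) = 0 → p = 0 ∧ q = 0 ∧ r = 0)
    (x₀ y₀ : ℝ) (hx₀ : x₀ ∈ Set.Ico (0:ℝ) 1) (hy₀ : y₀ ∈ Set.Ico (0:ℝ) 1) :
    Set.Ico (0:ℝ) 1 ×ˢ Set.Ico (0:ℝ) 1 ⊆
      closure {p : ℝ × ℝ | ∃ n : ℕ, p = (rectS α γ)^[n] (x₀, y₀)} := by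
  rintro ⟨a, b⟩ ⟨ha, hb⟩
  rw [Metric.mem_closure_iff]
  intro ε hε
  set δ : ℝ := min (ε/8) (1/8) with hδdef
  have hδ0 : 0 < δ := by
    apply lt_min <;> linarith
  have hδε : δ ≤ ε/8 := min_le_left _ _
  have hδ8 : δ ≤ 1/8 := min_le_right _ _
  set a' : ℝ := max a δ with ha'def
  set b' : ℝ := max b δ with hb'def
  have ha'0 : δ ≤ a' := le_max_right _ _
  have hb'0 : δ ≤ b' := le_max_right _ _
  have ha'1 : a' < 1 := max_lt ha.2 (by linarith)
  have hb'1 : b' < 1 := max_lt hb.2 (by linarith)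
  have haa' : |a - a'| ≤ δ := by
    rw [abs_le]
    constructor
    · have : a' ≤ a + δ := max_le (by linarith [ha.1]) (by linarith [ha.1])
      linarith
    · linarith [le_max_left a δ]
  have hbb' : |b - b'| ≤ δ := by
    rw [abs_le]
    constructor
    · have : b' ≤ b + δ := max_le (by linarith [hb.1]) (by linarith [hb.1])
      linarith
    · linarith [le_max_left b δ]
  set ε₁ : ℝ := min (min δ ((1 - a')/4)) (min (b'/4) ((1 - b')/4)) with hε₁def
  have hε₁0 : 0 < ε₁ := by
    apply lt_min
    · exact lt_min hδ0 (by linarith)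
    · exact lt_min (by linarith) (by linarith)
  have hε₁δ : ε₁ ≤ δ := le_trans (min_le_left _ _) (min_le_left _ _)
  have hε₁a : ε₁ ≤ (1 - a')/4 := le_trans (min_le_left _ _) (min_le_right _ _)
  have hε₁b : ε₁ ≤ b'/4 := le_trans (min_le_right _ _) (min_le_left _ _)
  have hε₁b' : ε₁ ≤ (1 - b')/4 := le_trans (min_le_right _ _) (min_le_right _ _)
  clear_value δ a' b' ε₁
  have hind : ∀ p q r : ℤ, (p:ℝ) + q*α + r*(α*γ) = 0 → p = 0 ∧ q = 0 ∧ r = 0 := by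
    intro p q r h
    have h2 : ((p:ℚ):ℝ) + ((q:ℚ):ℝ) * α + ((r:ℚ):ℝ) * (α*γ) = 0 := by
      push_cast
      exact_mod_cast h
    obtain ⟨h1, h2, h3⟩ := hindep _ _ _ h2
    exact ⟨by exact_mod_cast h1, by exact_mod_cast h2, by exact_mod_cast h3⟩
  obtain ⟨n, m₁, m₂, hw₁, hw₂⟩ := kronecker α (α*γ) hind (a' - x₀)
    (b' + γ*a' - y₀ - γ*x₀) hε₁0 (by linarith)
  set w₁ : ℝ := n*α - (a' - x₀) - m₁ with hw₁def
  set w₂ : ℝ := n*(α*γ) - (b' + γ*a' - y₀ - γ*x₀) - m₂ with hw₂def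
  have hu : x₀ + (n:ℝ)*α = (a' + w₁) + (m₁:ℝ) := by rw [hw₁def]; ring
  have hw₁a : |w₁| < ε₁ := hw₁
  have hw₂a : |w₂| < ε₁ := hw₂
  have habs1 : -ε₁ < w₁ ∧ w₁ < ε₁ := abs_lt.mp hw₁a
  have habs2 : -ε₁ < w₂ ∧ w₂ < ε₁ := abs_lt.mp hw₂a
  have hfru : Int.fract (x₀ + (n:ℝ)*α) = a' + w₁ := by
    rw [hu, show ((m₁:ℝ)) = ((m₁:ℤ):ℝ) by norm_cast, Int.fract_add_intCast]
    exact Int.fract_eq_self.mpr ⟨by linarith [habs1.1], by linarith [habs1.2]⟩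
  have hflu : ⌊x₀ + (n:ℝ)*α⌋ = m₁ := by
    apply Int.floor_eq_iff.mpr
    constructor
    · push_cast
      linarith [habs1.1]
    · push_cast
      linarith [habs1.2]
  have hsnd : Int.fract (y₀ + γ * (⌊x₀ + (n:ℝ)*α⌋ : ℤ)) = b' + (w₂ - γ*w₁) := by
    rw [hflu]
    have hval : y₀ + γ * (m₁:ℝ) = (b' + (w₂ - γ*w₁)) + (m₂:ℝ) := by
      rw [hw₂def, hw₁def]
      ring
    rw [hval, show ((m₂:ℝ)) = ((m₂:ℤ):ℝ) by norm_cast, Int.fract_add_intCast]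
    apply Int.fract_eq_self.mpr
    have hγ1 := hγ.1
    have hγ2 := hγ.2
    have h1 : |γ*w₁| < ε₁ := by
      rw [abs_mul, abs_of_pos hγ1]
      calc γ * |w₁| ≤ 1 * |w₁| := by nlinarith [abs_nonneg w₁]
        _ < ε₁ := by rw [one_mul]; exact hw₁a
    have := abs_lt.mp h1
    constructor
    · linarith [habs2.1, this.2]
    · linarith [habs2.2, this.1]
  clear_value w₁ w₂
  refine ⟨(rectS α γ)^[n] (x₀, y₀), ⟨n, rfl⟩, ?_⟩
  rw [rect_iterate α γ hα x₀ y₀ hx₀ hy₀ n, Prod.dist_eq]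
  have hd1 : dist a (Int.fract (x₀ + (n:ℝ)*α)) < ε := by
    rw [Real.dist_eq, hfru]
    have e0 : a - (a' + w₁) = (a - a') - w₁ := by ring
    rw [e0]
    have e1 : |(a - a') - w₁| ≤ |a - a'| + |w₁| := abs_sub (a - a') w₁
    have : |a - a'| + |w₁| < δ + ε₁ := by linarith [hw₁a]
    linarith
  have hd2 : dist b (Int.fract (y₀ + γ * (⌊x₀ + (n:ℝ)*α⌋:ℤ))) < ε := by
    rw [Real.dist_eq, hsnd]
    have h1 : |γ*w₁| ≤ |w₁| := by
      rw [abs_mul, abs_of_pos hγ.1]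
      nlinarith [abs_nonneg w₁, hγ.2]
    have e0 : b - (b' + (w₂ - γ*w₁)) = (b - b') - (w₂ - γ*w₁) := by ring
    rw [e0]
    have e1 : |(b - b') - (w₂ - γ*w₁)| ≤ |b - b'| + |w₂ - γ*w₁| := abs_sub _ _
    have e2 : |w₂ - γ*w₁| ≤ |w₂| + |γ*w₁| := abs_sub _ _
    have : |w₂| + |γ*w₁| < ε₁ + ε₁ := by linarith [hw₂a, h1, hw₁a]
    linarith
  simp only [max_lt_iff]
  exact ⟨hd1, hd2⟩
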